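/- Let f₀ : ℝⁿ → ℝⁿ be continuously differentiable, X ⊆ ℝⁿ, and let c_X ≥ 0 and L_f ≥ 0 be constants such that for all z, z̃ ∈ X: ‖f₀(z) − f₀(z̃) − Df₀(z̃)(z − z̃)‖₂ ≤ c_X‖z − z̃‖₂² and ‖f₀(z) − f₀(z̃)‖₂ ≤ L_f‖z − z̃‖₂. Let B ∈ ℝ^{n×m}, x₀ ∈ X, K ∈ ℕ, and inputs u₀, …, u_{K−1} ∈ ℝᵐ. Define the true trajectory by x₀ given and x_{k+1} = f₀(x_k) + B·u_k, and the linearization-based prediction by x̄₀ = x₀ and x̄_{k+1} = f₀(x₀) + Df₀(x₀)(x̄_k − x₀) + B·u_k. If x_k ∈ X and x̄_k ∈ X for all k ≤ K, then the prediction error satisfies, for every k ≤ K: ‖x̄_k − x_k‖₂ ≤ c_X · Σ_{j=0}^{k−1} L_f^{k−1−j}‖x̄_j − x₀‖₂². -/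

import Mathlib

open Matrix

noncomputable section

/-- Euclidean norm on `Fin k → ℝ`. -/
def en {k : ℕ} (x : Fin k → ℝ) : ℝ := Real.sqrt (∑ i, x i ^ 2)

lemma en_eq_norm {k : ℕ} (x : Fin k → ℝ) :
    en x = ‖(WithLp.equiv 2 (Fin k → ℝ)).symm x‖ := by
  rw [EuclideanSpace.norm_eq]
  simp [en, sq_abs]

lemma en_zero {k : ℕ} : en (0 : Fin k → ℝ) = 0 := by
  simp [en_eq_norm]

lemma en_neg {k : ℕ} (x : Fin k → ℝ) : en (-x) = en x := by
  rw [en_eq_norm, en_eq_norm, WithLp.equiv_symm_apply, WithLp.toLp_neg, norm_neg]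

lemma en_add_le {k : ℕ} (x y : Fin k → ℝ) : en (x + y) ≤ en x + en y := by
  rw [en_eq_norm, en_eq_norm, en_eq_norm, WithLp.equiv_symm_apply, WithLp.toLp_add]
  exact norm_add_le _ _

/-- Jacobian matrix of `g` at `xt`. -/
def jac {n q : ℕ} (g : (Fin n → ℝ) → Fin q → ℝ) (xt : Fin n → ℝ) :
    Matrix (Fin q) (Fin n) ℝ :=
  LinearMap.toMatrix' (fderiv ℝ g xt).toLinearMap

/-- Error bound between the true trajectory of `x⁺ = f₀(x) + Bu` and the
prediction by the dynamics linearized at the initial state `x₀`: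
`‖x̄_k − x_k‖₂ ≤ c_X Σ_{j<k} L_f^{k−1−j} ‖x̄_j − x₀‖₂²`. -/
theorem stmt14 {n m : ℕ} (f0 : (Fin n → ℝ) → Fin n → ℝ)
    (hf0 : ContDiff ℝ 1 f0) (X : Set (Fin n → ℝ))
    (cX Lf : ℝ) (hcX : 0 ≤ cX) (hLf : 0 ≤ Lf)
    (hTaylor : ∀ z ∈ X, ∀ zt ∈ X,
      en (f0 z - f0 zt - (jac f0 zt).mulVec (z - zt)) ≤ cX * en (z - zt) ^ 2)
    (hLip : ∀ z ∈ X, ∀ zt ∈ X, en (f0 z - f0 zt) ≤ Lf * en (z - zt))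
    (B : Matrix (Fin n) (Fin m) ℝ) (x0 : Fin n → ℝ) (hx0 : x0 ∈ X)
    (K : ℕ) (u : ℕ → Fin m → ℝ)
    (x xb : ℕ → Fin n → ℝ)
    (hxinit : x 0 = x0) (hxbinit : xb 0 = x0)
    (hxdyn : ∀ k < K, x (k + 1) = f0 (x k) + B.mulVec (u k))
    (hxbdyn : ∀ k < K,
      xb (k + 1) = f0 x0 + (jac f0 x0).mulVec (xb k - x0) + B.mulVec (u k))
    (hxX : ∀ k ≤ K, x k ∈ X) (hxbX : ∀ k ≤ K, xb k ∈ X) :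
    ∀ k ≤ K, en (xb k - x k) ≤
      cX * ∑ j ∈ Finset.range k, Lf ^ (k - 1 - j) * en (xb j - x0) ^ 2 := by
  intro k
  induction k with
  | zero =>
    intro _
    simp [hxinit, hxbinit, en_zero]
  | succ k ih =>
    intro hk1
    have hkK : k < K := hk1
    have hkle : k ≤ K := le_of_lt hkK
    have ih' := ih hkle
    -- decompose the error
    have hdecomp : xb (k + 1) - x (k + 1) =
        -(f0 (xb k) - f0 x0 - (jac f0 x0).mulVec (xb k - x0))
          + (f0 (xb k) - f0 (x k)) := by
      rw [hxdyn k hkK, hxbdyn k hkK]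
      abel
    have h1 : en (-(f0 (xb k) - f0 x0 - (jac f0 x0).mulVec (xb k - x0)))
        ≤ cX * en (xb k - x0) ^ 2 := by
      rw [en_neg]
      exact hTaylor _ (hxbX k hkle) _ hx0
    have h2 : en (f0 (xb k) - f0 (x k)) ≤ Lf * en (xb k - x k) :=
      hLip _ (hxbX k hkle) _ (hxX k hkle)
    have hstep : en (xb (k + 1) - x (k + 1)) ≤
        cX * en (xb k - x0) ^ 2 + Lf * en (xb k - x k) := by
      rw [hdecomp]
      exact le_trans (en_add_le _ _) (add_le_add h1 h2)
    have h3 : Lf * en (xb k - x k) ≤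
        Lf * (cX * ∑ j ∈ Finset.range k, Lf ^ (k - 1 - j) * en (xb j - x0) ^ 2) :=
      mul_le_mul_of_nonneg_left ih' hLf
    have hsum : cX * en (xb k - x0) ^ 2 +
        Lf * (cX * ∑ j ∈ Finset.range k, Lf ^ (k - 1 - j) * en (xb j - x0) ^ 2)
        = cX * ∑ j ∈ Finset.range (k + 1),
            Lf ^ (k + 1 - 1 - j) * en (xb j - x0) ^ 2 := by
      rw [Finset.sum_range_succ]
      have hlast : Lf ^ (k + 1 - 1 - k) = 1 := by norm_num
      rw [hlast, one_mul, Finset.mul_sum, Finset.mul_sum]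
      have hterm : ∀ j ∈ Finset.range k,
          cX * (Lf * (Lf ^ (k - 1 - j) * en (xb j - x0) ^ 2))
            = cX * (Lf ^ (k + 1 - 1 - j) * en (xb j - x0) ^ 2) := by
        intro j hj
        have hjk : j < k := Finset.mem_range.mp hj
        have : Lf * Lf ^ (k - 1 - j) = Lf ^ (k + 1 - 1 - j) := by
          rw [← pow_succ']
          congr 1
          omega
        rw [← mul_assoc Lf, this]
      calc cX * en (xb k - x0) ^ 2 +
          ∑ j ∈ Finset.range k, Lf * (cX * (Lf ^ (k - 1 - j) * en (xb j - x0) ^ 2))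
          = (∑ j ∈ Finset.range k, cX * (Lf ^ (k + 1 - 1 - j) * en (xb j - x0) ^ 2))
            + cX * en (xb k - x0) ^ 2 := by
            rw [add_comm]
            congr 1
            apply Finset.sum_congr rfl
            intro j hj
            rw [mul_left_comm]
            exact hterm j hj
        _ = _ := by rw [← Finset.mul_sum, mul_add]
    calc en (xb (k + 1) - x (k + 1))
        ≤ cX * en (xb k - x0) ^ 2 + Lf * en (xb k - x k) := hstep
      _ ≤ cX * en (xb k - x0) ^ 2 +
          Lf * (cX * ∑ j ∈ Finset.range k, Lf ^ (k - 1 - j) * en (xb j - x0) ^ 2) := by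
          linarith
      _ = _ := hsum
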